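/- Suppose 0 < α < 1 and b is an even positive integer. Then Φ is α-Hölder continuous on ℝ: there exists a constant C ≥ 0 such that |Φ(x) − Φ(y)| ≤ C|x − y|^α for all x, y ∈ ℝ. In fact one may take C = b^{1−α}/(1 − b^{−(1−α)}) + b^{−α}/(1 − b^{−α}). -/

import Mathlib

open Set Filter Topology

/-- The sawtooth function `φ(x) = dist(x, 2ℤ)`. -/
noncomputable def sawtooth (x : ℝ) : ℝ :=
  Metric.infDist x {y : ℝ | ∃ m : ℤ, y = 2 * m}

/-- Katzourakis' function `Φ(x) = Σ_{k=0}^∞ b^{-kα} φ(b^k x)`. -/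
noncomputable def Phi (b : ℕ) (α : ℝ) (x : ℝ) : ℝ :=
  ∑' k : ℕ, (b : ℝ) ^ (-((k : ℝ) * α)) * sawtooth ((b : ℝ) ^ k * x)

lemma sawtooth_nonneg (x : ℝ) : 0 ≤ sawtooth x := Metric.infDist_nonneg

lemma sawtooth_le_one (x : ℝ) : sawtooth x ≤ 1 := by
  have hm : (2 * ((round (x / 2) : ℤ) : ℝ)) ∈ {y : ℝ | ∃ m : ℤ, y = 2 * m} :=
    ⟨round (x / 2), rfl⟩
  calc sawtooth x ≤ dist x (2 * ((round (x / 2) : ℤ) : ℝ)) :=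
        Metric.infDist_le_dist_of_mem hm
    _ ≤ 1 := by
        rw [Real.dist_eq]
        have h := abs_sub_round (x / 2)
        have : x - 2 * ((round (x / 2) : ℤ) : ℝ) = 2 * (x / 2 - round (x / 2)) := by ring
        rw [this, abs_mul, abs_two]
        linarith [abs_nonneg (x / 2 - ((round (x / 2) : ℤ) : ℝ))]

lemma sawtooth_lipschitz (u v : ℝ) : |sawtooth u - sawtooth v| ≤ |u - v| := by
  rw [abs_sub_le_iff]
  constructor
  · have := Metric.infDist_le_infDist_add_dist
      (s := {y : ℝ | ∃ m : ℤ, y = 2 * m}) (x := u) (y := v)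
    rw [Real.dist_eq] at this
    unfold sawtooth; linarith [le_abs_self (u - v)]
  · have := Metric.infDist_le_infDist_add_dist
      (s := {y : ℝ | ∃ m : ℤ, y = 2 * m}) (x := v) (y := u)
    rw [Real.dist_eq] at this
    unfold sawtooth
    have h2 : |v - u| = |u - v| := abs_sub_comm v u
    linarith [le_abs_self (v - u)]

lemma sawtooth_diff_le_one (u v : ℝ) : |sawtooth u - sawtooth v| ≤ 1 := by
  rw [abs_sub_le_iff]
  constructor
  · linarith [sawtooth_le_one u, sawtooth_nonneg v]
  · linarith [sawtooth_le_one v, sawtooth_nonneg u]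

set_option maxHeartbeats 1600000 in
/-- If `0 < α < 1` and `b` is an even positive integer, then `Φ` is `α`-Hölder on `ℝ`,
with constant `C = b^{1-α}/(1 - b^{-(1-α)}) + b^{-α}/(1 - b^{-α})`. -/
theorem phi_holder (α : ℝ) (hα0 : 0 < α) (hα1 : α < 1) (b : ℕ) (hb : 0 < b)
    (hbe : Even b) :
    (∃ C : ℝ, 0 ≤ C ∧ ∀ x y : ℝ, |Phi b α x - Phi b α y| ≤ C * |x - y| ^ α) ∧
    ∀ x y : ℝ, |Phi b α x - Phi b α y| ≤
      ((b : ℝ) ^ (1 - α) / (1 - (b : ℝ) ^ (-(1 - α))) +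
        (b : ℝ) ^ (-α) / (1 - (b : ℝ) ^ (-α))) * |x - y| ^ α := by
  -- basic facts about b
  have hb2 : 2 ≤ b := by
    obtain ⟨m, rfl⟩ := hbe; omega
  set B : ℝ := (b : ℝ) with hB
  have hB2 : (2 : ℝ) ≤ B := by rw [hB]; exact_mod_cast hb2
  have hB1 : (1 : ℝ) < B := by linarith
  have hB0 : (0 : ℝ) < B := by linarith
  set r : ℝ := B ^ (-α) with hrdef
  set s : ℝ := B ^ (1 - α) with hsdef
  have hr0 : 0 < r := Real.rpow_pos_of_pos hB0 _
  have hr1 : r < 1 := Real.rpow_lt_one_of_one_lt_of_neg hB1 (by linarith)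
  have hs1 : 1 < s := by
    rw [hsdef]
    rw [Real.one_lt_rpow_iff hB0.le]
    exact Or.inl ⟨hB1, by linarith⟩
  have hs0 : 0 < s := by linarith
  -- rewriting powers
  have hpow : ∀ k : ℕ, B ^ (-((k : ℝ) * α)) = r ^ k := by
    intro k
    rw [hrdef, ← Real.rpow_natCast (B ^ (-α)) k, ← Real.rpow_mul hB0.le]
    ring_nf
  have hpows : ∀ k : ℕ, B ^ k * r ^ k = s ^ k := by
    intro k
    rw [← mul_pow]
    congr 1
    rw [hrdef, hsdef]
    nth_rewrite 1 [← Real.rpow_one B]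
    rw [← Real.rpow_add hB0]
    ring_nf
  have hsn : ∀ n : ℕ, s ^ n = ((B ^ n : ℝ)) ^ (1 - α) := by
    intro n
    rw [hsdef, ← Real.rpow_natCast (B ^ (1 - α)) n, ← Real.rpow_mul hB0.le,
      ← Real.rpow_natCast B n, ← Real.rpow_mul hB0.le, mul_comm]
  have hrn : ∀ n : ℕ, r ^ n = ((B ^ n : ℝ)) ^ (-α) := by
    intro n
    rw [hrdef, ← Real.rpow_natCast (B ^ (-α)) n, ← Real.rpow_mul hB0.le,
      ← Real.rpow_natCast B n, ← Real.rpow_mul hB0.le, mul_comm]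
  -- summability
  have hterm_nonneg : ∀ (x : ℝ) (k : ℕ), 0 ≤ B ^ (-((k : ℝ) * α)) * sawtooth (B ^ k * x) :=
    fun x k => mul_nonneg (Real.rpow_nonneg hB0.le _) (sawtooth_nonneg _)
  have hterm_le : ∀ (x : ℝ) (k : ℕ), B ^ (-((k : ℝ) * α)) * sawtooth (B ^ k * x) ≤ r ^ k := by
    intro x k
    rw [hpow k]
    calc r ^ k * sawtooth (B ^ k * x) ≤ r ^ k * 1 := by
          exact mul_le_mul_of_nonneg_left (sawtooth_le_one _) (pow_nonneg hr0.le k)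
      _ = r ^ k := mul_one _
  have hgeom : Summable (fun k : ℕ => r ^ k) := summable_geometric_of_lt_one hr0.le hr1
  have hsum : ∀ x : ℝ, Summable (fun k : ℕ => B ^ (-((k : ℝ) * α)) * sawtooth (B ^ k * x)) :=
    fun x => Summable.of_nonneg_of_le (hterm_nonneg x) (hterm_le x) hgeom
  -- the key pointwise estimate
  have hgeomsum : ∑' k : ℕ, r ^ k = (1 - r)⁻¹ := tsum_geometric_of_lt_one hr0.le hr1
  set C : ℝ := B ^ (1 - α) / (1 - B ^ (-(1 - α))) + B ^ (-α) / (1 - B ^ (-α)) with hCdef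
  have hCeq : C = s * s / (s - 1) + r / (1 - r) := by
    rw [hCdef, ← hrdef, ← hsdef]
    have h1 : B ^ (-(1 - α)) = s⁻¹ := by rw [hsdef, Real.rpow_neg hB0.le]
    rw [h1]
    congr 1
    rw [div_eq_div_iff]
    · field_simp
    · have : s⁻¹ < 1 := by
        rw [inv_lt_one_iff₀]; right; exact hs1
      linarith
    · linarith
  have hC1 : (1 - r)⁻¹ ≤ C := by
    rw [hCeq]
    have h1 : 1 ≤ s * s / (s - 1) := by
      rw [le_div_iff₀ (by linarith)]
      nlinarith
    have hr1' : (1 : ℝ) - r ≠ 0 := by linarith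
    have h2 : (1 - r)⁻¹ = 1 + r / (1 - r) := by
      field_simp
      ring
    linarith
  have hC0 : 0 ≤ C := by
    rw [hCeq]
    have h1 : 0 ≤ s * s / (s - 1) := div_nonneg (by nlinarith) (by linarith)
    have h2 : 0 ≤ r / (1 - r) := by
      apply div_nonneg hr0.le; linarith
    linarith
  have key : ∀ x y : ℝ, |Phi b α x - Phi b α y| ≤ C * |x - y| ^ α := by
    intro x y
    rcases eq_or_ne x y with rfl | hxy
    · have hl : |Phi b α x - Phi b α x| = 0 := by simp
      rw [hl]
      exact mul_nonneg hC0 (Real.rpow_nonneg (abs_nonneg _) _)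
    set t : ℝ := |x - y| with htdef
    have ht0 : 0 < t := abs_pos.mpr (sub_ne_zero.mpr hxy)
    have hta : 0 < t ^ α := Real.rpow_pos_of_pos ht0 _
    -- difference as a tsum
    set a : ℕ → ℝ := fun k =>
      B ^ (-((k : ℝ) * α)) * sawtooth (B ^ k * x) - B ^ (-((k : ℝ) * α)) * sawtooth (B ^ k * y)
      with hadef
    have habs_le_r : ∀ k, |a k| ≤ r ^ k := by
      intro k
      rw [hadef]
      simp only
      rw [← mul_sub, abs_mul, hpow k, abs_of_nonneg (pow_nonneg hr0.le k)]
      calc r ^ k * |sawtooth (B ^ k * x) - sawtooth (B ^ k * y)| ≤ r ^ k * 1 :=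
            mul_le_mul_of_nonneg_left (sawtooth_diff_le_one _ _) (pow_nonneg hr0.le k)
        _ = r ^ k := mul_one _
    have habs_le_s : ∀ k, |a k| ≤ s ^ k * t := by
      intro k
      rw [hadef]
      simp only
      rw [← mul_sub, abs_mul, hpow k, abs_of_nonneg (pow_nonneg hr0.le k)]
      have hlip : |sawtooth (B ^ k * x) - sawtooth (B ^ k * y)| ≤ B ^ k * t := by
        calc |sawtooth (B ^ k * x) - sawtooth (B ^ k * y)| ≤ |B ^ k * x - B ^ k * y| :=
              sawtooth_lipschitz _ _
          _ = B ^ k * t := by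
              rw [← mul_sub, abs_mul, abs_of_nonneg (pow_nonneg hB0.le k), htdef]
      calc r ^ k * |sawtooth (B ^ k * x) - sawtooth (B ^ k * y)| ≤ r ^ k * (B ^ k * t) :=
            mul_le_mul_of_nonneg_left hlip (pow_nonneg hr0.le k)
        _ = s ^ k * t := by rw [← hpows k]; ring
    have habs_nonneg : ∀ k, (0 : ℝ) ≤ |a k| := fun k => abs_nonneg _
    have hsuma : Summable a := (hsum x).sub (hsum y)
    have hsumabs : Summable (fun k => |a k|) :=
      Summable.of_nonneg_of_le habs_nonneg habs_le_r hgeom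
    have hdiff : Phi b α x - Phi b α y = ∑' k, a k := by
      rw [Phi, Phi]
      exact (Summable.tsum_sub (hsum x) (hsum y)).symm
    have hstep1 : |Phi b α x - Phi b α y| ≤ ∑' k, |a k| := by
      rw [hdiff]
      calc |∑' k, a k| = ‖∑' k, a k‖ := (Real.norm_eq_abs _).symm
        _ ≤ ∑' k, ‖a k‖ :=
            norm_tsum_le_tsum_norm (by simpa only [Real.norm_eq_abs] using hsumabs)
        _ = ∑' k, |a k| := by simp only [Real.norm_eq_abs]
    rcases le_or_gt 1 t with ht1 | ht1
    · -- large distance: use the uniform bound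
      have h2 : ∑' k, |a k| ≤ (1 - r)⁻¹ := by
        rw [← hgeomsum]
        exact Summable.tsum_le_tsum habs_le_r hsumabs hgeom
      have h3 : (1 : ℝ) ≤ t ^ α := Real.one_le_rpow ht1 hα0.le
      calc |Phi b α x - Phi b α y| ≤ (1 - r)⁻¹ := le_trans hstep1 h2
        _ ≤ C := hC1
        _ = C * 1 := (mul_one C).symm
        _ ≤ C * t ^ α := mul_le_mul_of_nonneg_left h3 hC0
    · -- small distance: split the sum
      obtain ⟨n, hn⟩ := pow_unbounded_of_one_lt (1 / t) hB1
      have hex : ∃ n : ℕ, 1 ≤ B ^ n * t := by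
        refine ⟨n, ?_⟩
        have := (div_lt_iff₀ ht0).mp hn
        linarith
      set N := Nat.find hex with hNdef
      have hN : 1 ≤ B ^ N * t := Nat.find_spec hex
      have hNpos : N ≠ 0 := by
        intro h
        rw [h] at hN
        simp at hN
        linarith
      obtain ⟨M, hM⟩ : ∃ M, N = M + 1 := ⟨N - 1, by omega⟩
      rw [hM] at hN
      have hMlt : B ^ M * t < 1 := by
        have := Nat.find_min hex (m := M) (by omega)
        push_neg at this
        exact this
      -- split the sum at M + 2
      have hsplit : ∑' k, |a k| =
          (∑ k ∈ Finset.range (M + 2), |a k|) + ∑' k, |a (k + (M + 2))| :=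
        (Summable.sum_add_tsum_nat_add (M + 2) hsumabs).symm
      -- finite part
      have hfin : (∑ k ∈ Finset.range (M + 2), |a k|) ≤ (s * s / (s - 1)) * t ^ α := by
        have h1 : (∑ k ∈ Finset.range (M + 2), |a k|) ≤
            ∑ k ∈ Finset.range (M + 2), s ^ k * t :=
          Finset.sum_le_sum fun k _ => habs_le_s k
        have h2 : ∑ k ∈ Finset.range (M + 2), s ^ k * t =
            ((s ^ (M + 2) - 1) / (s - 1)) * t := by
          rw [← Finset.sum_mul, geom_sum_eq (ne_of_gt hs1)]
        have h3 : s ^ (M + 2) * t ≤ s * s * t ^ α := by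
          have hB' : B ^ M < 1 / t := by
            rw [lt_div_iff₀ ht0]; linarith
          have hBM2 : (B : ℝ) ^ (M + 2) ≤ B ^ 2 / t := by
            have : (B : ℝ) ^ (M + 2) = B ^ M * B ^ 2 := by ring
            rw [this, div_eq_mul_inv, ← one_div]
            calc B ^ M * B ^ 2 ≤ (1 / t) * B ^ 2 :=
                  mul_le_mul_of_nonneg_right hB'.le (by positivity)
              _ = B ^ 2 * (1 / t) := mul_comm _ _
          have hmono : s ^ (M + 2) ≤ (B ^ 2 / t) ^ (1 - α) := by
            rw [hsn (M + 2)]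
            exact Real.rpow_le_rpow (by positivity) hBM2 (by linarith)
          have hrw : (B ^ 2 / t) ^ (1 - α) * t = B ^ 2 / t * (B ^ 2 / t) ^ (-α) * t := by
            have : (1 - α) = 1 + (-α) := by ring
            rw [this, Real.rpow_add (by positivity), Real.rpow_one]
          have hBt : (B ^ 2 / t) ^ (-α) ≤ (B ^ 2) ^ (-α) / t ^ (-α) * t ^ (-α) *
              (t ^ (-α))⁻¹ := by
            rw [Real.div_rpow (by positivity) ht0.le]
            rw [mul_assoc, mul_inv_cancel₀ (ne_of_gt (Real.rpow_pos_of_pos ht0 _)), mul_one]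
          -- simpler: (B^2/t)^(1-α) * t = B^(2(1-α)) * t^α
          have htt : t ^ α * t ^ (1 - α) = t := by
            rw [← Real.rpow_add ht0]; norm_num
          have hkey : (B ^ 2 / t) ^ (1 - α) * t = (B ^ 2) ^ (1 - α) * t ^ α := by
            rw [Real.div_rpow (by positivity) ht0.le]
            rw [div_mul_eq_mul_div, div_eq_iff (ne_of_gt (Real.rpow_pos_of_pos ht0 _))]
            rw [mul_assoc, htt]
          have hB2s : ((B ^ 2 : ℝ)) ^ (1 - α) = s * s := by
            rw [← hsn 2]; ring
          calc s ^ (M + 2) * t ≤ (B ^ 2 / t) ^ (1 - α) * t :=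
                mul_le_mul_of_nonneg_right hmono ht0.le
            _ = (B ^ 2) ^ (1 - α) * t ^ α := hkey
            _ = s * s * t ^ α := by rw [hB2s]
        have h4 : ((s ^ (M + 2) - 1) / (s - 1)) * t ≤ s ^ (M + 2) * t / (s - 1) := by
          rw [div_mul_eq_mul_div]
          apply div_le_div_of_nonneg_right ?_ (by linarith)
          nlinarith
        have h5 : s ^ (M + 2) * t / (s - 1) ≤ s * s * t ^ α / (s - 1) :=
          div_le_div_of_nonneg_right h3 (by linarith) |>.trans_eq rfl
        calc (∑ k ∈ Finset.range (M + 2), |a k|) ≤ ((s ^ (M + 2) - 1) / (s - 1)) * t := by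
              rw [← h2]; exact h1
          _ ≤ s ^ (M + 2) * t / (s - 1) := h4
          _ ≤ s * s * t ^ α / (s - 1) := h5
          _ = (s * s / (s - 1)) * t ^ α := by ring
      -- tail part
      have htail : (∑' k, |a (k + (M + 2))|) ≤ (r / (1 - r)) * t ^ α := by
        have h1 : ∀ k : ℕ, |a (k + (M + 2))| ≤ r ^ k * r ^ (M + 2) := by
          intro k
          calc |a (k + (M + 2))| ≤ r ^ (k + (M + 2)) := habs_le_r _
            _ = r ^ k * r ^ (M + 2) := pow_add r k (M + 2)
        have hsumtail : Summable (fun k => |a (k + (M + 2))|) :=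
          hsumabs.comp_injective (add_left_injective (M + 2))
        have h2 : (∑' k, |a (k + (M + 2))|) ≤ ∑' k : ℕ, r ^ k * r ^ (M + 2) := by
          apply Summable.tsum_le_tsum h1 hsumtail (hgeom.mul_right _)
        have h3 : ∑' k : ℕ, r ^ k * r ^ (M + 2) = (1 - r)⁻¹ * r ^ (M + 2) := by
          rw [tsum_mul_right, hgeomsum]
        have h4 : r ^ (M + 1) ≤ t ^ α := by
          rw [hrn (M + 1)]
          have hge : (1 : ℝ) / t ≤ B ^ (M + 1) := by
            rw [div_le_iff₀ ht0]; linarith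
          calc ((B ^ (M + 1) : ℝ)) ^ (-α) ≤ ((1 : ℝ) / t) ^ (-α) :=
                Real.rpow_le_rpow_of_nonpos (by positivity) hge (by linarith)
            _ = t ^ α := by
                rw [one_div, Real.inv_rpow ht0.le, Real.rpow_neg ht0.le, inv_inv]
        have h5 : r ^ (M + 2) ≤ r * t ^ α := by
          calc r ^ (M + 2) = r * r ^ (M + 1) := by ring
            _ ≤ r * t ^ α := mul_le_mul_of_nonneg_left h4 hr0.le
        calc (∑' k, |a (k + (M + 2))|) ≤ (1 - r)⁻¹ * r ^ (M + 2) := le_of_le_of_eq h2 h3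
          _ ≤ (1 - r)⁻¹ * (r * t ^ α) :=
              mul_le_mul_of_nonneg_left h5 (inv_nonneg.mpr (by linarith))
          _ = (r / (1 - r)) * t ^ α := by ring
      calc |Phi b α x - Phi b α y| ≤ ∑' k, |a k| := hstep1
        _ = (∑ k ∈ Finset.range (M + 2), |a k|) + ∑' k, |a (k + (M + 2))| := hsplit
        _ ≤ (s * s / (s - 1)) * t ^ α + (r / (1 - r)) * t ^ α := add_le_add hfin htail
        _ = (s * s / (s - 1) + r / (1 - r)) * t ^ α := by ring
        _ = C * t ^ α := by rw [hCeq]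
  exact ⟨⟨C, hC0, key⟩, key⟩
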